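/- Let K = F(y), let τ₁,…,τ_r be elements of G^τ, and let τ̄₁,…,τ̄_r be automorphisms of the algebraic closure of K(z) whose restrictions to K(z) equal τ₁,…,τ_r (arising from arbitrary extensions of the τ_{q,z_i} to automorphisms of the algebraic closure over the algebraic closure of K). Then f ∈ K(z) satisfies f = Σ_{i=1}^r (τ̄_i(ḡ_i) − ḡ_i) for some ḡ₁,…,ḡ_r in the algebraic closure of K(z) if and only if f = Σ_{i=1}^r (τ_i(g_i) − g_i) for some g₁,…,g_r ∈ K(z). -/

import Mathlib

noncomputable section NTsec
open Polynomial IntermediateField Module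

variable {L A : Type*} [Field L] [CharZero L] [Field A] [Algebra L A]
  [Algebra.IsAlgebraic L A]

/-- normalized trace -/
def nt (L : Type*) [Field L] {A : Type*} [Field A] [Algebra L A] (a : A) : L :=
  -(minpoly L a).nextCoeff / ((minpoly L a).natDegree : L)

lemma nt_algebraMap (c : L) : nt L (algebraMap L A c) = c := by
  rw [nt, minpoly.eq_X_sub_C]
  simp [nextCoeff_X_sub_C]

lemma nt_eq_trace {M : Type*} [Field M] [Algebra L M] [Algebra M A] [IsScalarTower L M A]
    [FiniteDimensional L M] (z : M) :
    nt L (algebraMap M A z) = ((finrank L M : L))⁻¹ * Algebra.trace L M z := by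
  have hz : IsIntegral L z := IsIntegral.of_finite L z
  have hmin : minpoly L (algebraMap M A z) = minpoly L z :=
    minpoly.algebraMap_eq (algebraMap M A).injective z
  have hgen : algebraMap L⟮z⟯ M (AdjoinSimple.gen L z) = z :=
    AdjoinSimple.algebraMap_gen L z
  have hming : minpoly L (AdjoinSimple.gen L z) = minpoly L z := by
    rw [← minpoly.algebraMap_eq (algebraMap L⟮z⟯ M).injective, hgen]
  have htr : Algebra.trace L L⟮z⟯ (AdjoinSimple.gen L z)
      = -(minpoly L z).nextCoeff := by
    have h := (adjoin.powerBasis hz).trace_gen_eq_nextCoeff_minpoly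
    rw [adjoin.powerBasis_gen, hming] at h
    exact h
  have h4 := Algebra.trace_algebraMap (R := L⟮z⟯) (S := M) (AdjoinSimple.gen L z)
  rw [hgen] at h4
  have htt : Algebra.trace L M z
      = finrank L⟮z⟯ M • Algebra.trace L L⟮z⟯ (AdjoinSimple.gen L z) := by
    rw [← Algebra.trace_trace (S := L⟮z⟯) (x := z), h4, map_nsmul]
  have hfr : finrank L L⟮z⟯ = (minpoly L z).natDegree := adjoin.finrank hz
  have hmul : finrank L L⟮z⟯ * finrank L⟮z⟯ M = finrank L M :=
    finrank_mul_finrank L L⟮z⟯ M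
  have hd0 : (minpoly L z).natDegree ≠ 0 := (minpoly.natDegree_pos hz).ne'
  have he0 : finrank L⟮z⟯ M ≠ 0 := (finrank_pos (R := L⟮z⟯) (M := M)).ne'
  rw [nt, hmin, htt, htr, nsmul_eq_mul, ← hmul, hfr]
  have hdL : ((minpoly L z).natDegree : L) ≠ 0 := Nat.cast_ne_zero.mpr hd0
  have heL : ((finrank L⟮z⟯ M : L)) ≠ 0 := Nat.cast_ne_zero.mpr he0
  push_cast
  field_simp

lemma nt_add (a b : A) : nt L (a + b) = nt L a + nt L b := by
  have ha : IsIntegral L a := (Algebra.IsIntegral.isIntegral a)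
  have hb : IsIntegral L b := (Algebra.IsIntegral.isIntegral b)
  haveI : FiniteDimensional L L⟮a⟯ := adjoin.finiteDimensional ha
  haveI : FiniteDimensional L L⟮b⟯ := adjoin.finiteDimensional hb
  set M : IntermediateField L A := L⟮a⟯ ⊔ L⟮b⟯ with hM
  haveI : FiniteDimensional L M := finiteDimensional_sup L⟮a⟯ L⟮b⟯
  have hma : a ∈ M := le_sup_left (α := IntermediateField L A)
    (mem_adjoin_simple_self L a)
  have hmb : b ∈ M := le_sup_right (α := IntermediateField L A)
    (mem_adjoin_simple_self L b)
  have h1 : a = algebraMap M A ⟨a, hma⟩ := rfl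
  have h2 : b = algebraMap M A ⟨b, hmb⟩ := rfl
  have h3 : a + b = algebraMap M A (⟨a, hma⟩ + ⟨b, hmb⟩) := by
    rw [map_add, ← h1, ← h2]
  rw [h3, nt_eq_trace, map_add, mul_add]
  conv_rhs => rw [h1, h2]
  rw [nt_eq_trace, nt_eq_trace]

end NTsec

section NTsec2
open Polynomial IntermediateField Module

variable {L A : Type*} [Field L] [CharZero L] [Field A] [Algebra L A]
  [Algebra.IsAlgebraic L A]

lemma minpoly_conj (τ : L ≃+* L) (τb : A ≃+* A)
    (h : ∀ x : L, τb (algebraMap L A x) = algebraMap L A (τ x)) (a : A) :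
    minpoly L (τb a) = (minpoly L a).map (τ : L →+* L) := by
  have ha : IsIntegral L a := Algebra.IsIntegral.isIntegral a
  symm
  apply minpoly.eq_of_irreducible_of_monic
  · have : (minpoly L a).map (τ : L →+* L) = mapEquiv (τ : L ≃+* L) (minpoly L a) := rfl
    rw [this, MulEquiv.irreducible_iff]
    exact minpoly.irreducible ha
  · have hcomp : (algebraMap L A).comp (τ : L →+* L)
        = (τb : A →+* A).comp (algebraMap L A) := by
      ext x; simp [h x]
    rw [aeval_def, eval₂_map, hcomp]
    have := hom_eval₂ (minpoly L a) (algebraMap L A) (τb : A →+* A) a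
    have h0 : Polynomial.eval₂ (algebraMap L A) a (minpoly L a) = 0 := by
      have h1 := minpoly.aeval L a
      rwa [aeval_def] at h1
    rw [show (τb a : A) = (τb : A →+* A) a from rfl, ← this, h0, map_zero]
  · exact (minpoly.monic ha).map _

lemma nt_conj (τ : L ≃+* L) (τb : A ≃+* A)
    (h : ∀ x : L, τb (algebraMap L A x) = algebraMap L A (τ x)) (a : A) :
    nt L (τb a) = τ (nt L a) := by
  rw [nt, nt, minpoly_conj τ τb h a, natDegree_map,
    nextCoeff_map (τ : L →+* L).injective]
  rw [map_div₀, map_neg, map_natCast]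
  rfl

lemma nt_zero : nt L (0 : A) = 0 := by
  simpa using nt_algebraMap (A := A) (0 : L)

/-- `nt` as an additive monoid hom. -/
noncomputable def ntHom : A →+ L := AddMonoidHom.mk' (nt L) nt_add

lemma summable_descend {r : ℕ} (τ : Fin r → (L ≃+* L)) (τb : Fin r → (A ≃+* A))
    (h : ∀ (i : Fin r) (x : L), τb i (algebraMap L A x) = algebraMap L A (τ i x))
    (f : L) (g : Fin r → A)
    (hg : algebraMap L A f = ∑ i : Fin r, (τb i (g i) - g i)) :
    f = ∑ i : Fin r, (τ i (nt L (g i)) - nt L (g i)) := by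
  have hnt : nt L (algebraMap L A f) = f := nt_algebraMap f
  have h2 : (ntHom : A →+ L) (∑ i : Fin r, (τb i (g i) - g i))
      = ∑ i : Fin r, (τ i (nt L (g i)) - nt L (g i)) := by
    rw [map_sum]
    refine Finset.sum_congr rfl fun i _ => ?_
    rw [map_sub]
    show nt L (τb i (g i)) - nt L (g i) = _
    rw [nt_conj (τ i) (τb i) (h i)]
  rw [← h2, ← hg]
  exact hnt.symm

end NTsec2




noncomputable section

/-- The field of rational functions `F(x₁,…,xₙ)`, modeled as the fraction field of the
multivariate polynomial ring. -/
abbrev MvRat (F : Type*) [Field F] (n : ℕ) := FractionRing (MvPolynomial (Fin n) F)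

/-- The image of the variable `xᵢ` in `F(x₁,…,xₙ)`. -/
def xv {F : Type*} [Field F] {n : ℕ} (i : Fin n) : MvRat F n :=
  algebraMap (MvPolynomial (Fin n) F) (MvRat F n) (MvPolynomial.X i)

/-- The subfield `F(x₂,…,xₙ)` of `F(x₁,…,xₙ)` (the variable `x₁` has index `0`). -/
def hatField (F : Type*) [Field F] (n : ℕ) [NeZero n] : Subfield (MvRat F n) :=
  Subfield.closure (Set.range (algebraMap F (MvRat F n)) ∪ (xv '' {i : Fin n | i ≠ 0}))

/-- `a` is a polynomial in `x1` over the subfield `E` of degree `< D`. -/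
def IsPolyDeg {L : Type*} [Field L] (E : Subfield L) (x1 : L) (D : ℕ) (a : L) : Prop :=
  ∃ cf : Fin D → E, a = ∑ k : Fin D, (cf k : L) * x1 ^ (k : ℕ)

/-- `a` is a polynomial in `x1` over the subfield `E`, i.e. `a ∈ E[x1]`. -/
def IsPolyE {L : Type*} [Field L] (E : Subfield L) (x1 a : L) : Prop :=
  ∃ D : ℕ, IsPolyDeg E x1 D a

/-- `a` is a Laurent polynomial in `x1` over the subfield `E`, i.e. `a ∈ E[x1, x1⁻¹]`. -/
def IsLaurent {L : Type*} [Field L] (E : Subfield L) (x1 a : L) : Prop :=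
  ∃ (s : Finset ℤ) (cf : ℤ → L), (∀ k ∈ s, cf k ∈ E) ∧ a = ∑ k ∈ s, cf k * x1 ^ k

/-- For a family `θ` of `F`-automorphisms and an exponent vector `α`,
the product `∏ i, θᵢ^(αᵢ)` (the element `θ_x^α` of the group generated by the `θᵢ`). -/
def thetaPowS {F L : Type*} [CommSemiring F] [Semiring L] [Algebra F L] {ι : Type*} [Fintype ι]
    (θ : ι → (L ≃ₐ[F] L)) (α : ι → ℤ) : L ≃ₐ[F] L :=
  (Finset.univ.toList.map fun i => θ i ^ α i).prod

/-- Membership in the space `V_{[d]_G,j}`: `f` is a finite sum of fractions `a_g / g(d)^j`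
with `g` in the group `G` and `a_g ∈ E[x₁]` of degree `< D` (`= deg_{x₁} d`). -/
def MemV {F L : Type*} [Field F] [Field L] [Algebra F L] (G : Set (L ≃ₐ[F] L))
    (E : Subfield L) (x1 : L) (dd : L) (D j : ℕ) (f : L) : Prop :=
  ∃ s : Finset (L ≃ₐ[F] L), ↑s ⊆ G ∧ ∃ a : (L ≃ₐ[F] L) → L,
    (∀ g ∈ s, IsPolyDeg E x1 D (a g)) ∧ f = ∑ g ∈ s, a g / (g dd) ^ j

/-- `p` and `p'` are `G`-equivalent: `p = c · g(p')` for some nonzero `c ∈ F` and `g ∈ G`. -/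
def GEquivSet {F L : Type*} [Field F] [Field L] [Algebra F L] (G : Set (L ≃ₐ[F] L))
    (p p' : L) : Prop :=
  ∃ c : F, c ≠ 0 ∧ ∃ g ∈ G, p = algebraMap F L c * g p'

/-- `w` divides `p` inside the ring `E[x1]`. -/
def DvdE {L : Type*} [Field L] (E : Subfield L) (x1 w p : L) : Prop :=
  ∃ u : L, IsPolyE E x1 u ∧ p = w * u

/-- `p ∈ E[x₁]` is normal w.r.t. `θ1`: `gcd(p, θ1^ℓ(p)) = 1` for all nonzero `ℓ ∈ ℤ`,
i.e. every common divisor (in `E[x₁]`) of `p` and `θ1^ℓ(p)` is a unit (lies in `E`). -/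
def NormalWrt {F L : Type*} [Field F] [Field L] [Algebra F L] (E : Subfield L) (x1 : L)
    (θ1 : L ≃ₐ[F] L) (p : L) : Prop :=
  ∀ ℓ : ℤ, ℓ ≠ 0 → ∀ w : L, IsPolyE E x1 w →
    DvdE E x1 w p → DvdE E x1 w ((θ1 ^ ℓ) p) → w ∈ E

/-- The isotropy group of `p` (in exponent-vector coordinates): the subgroup of `ℤ^ι`
of all `α` with `Θ(α)(p) = c·p` for some nonzero `c ∈ F`. -/
def isotropyZ {F L : Type*} [Field F] [Field L] [Algebra F L] {ι : Type*}
    (Θ : (ι → ℤ) → (L ≃ₐ[F] L))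
    (hadd : ∀ α β, Θ (α + β) = Θ α * Θ β) (h0 : Θ 0 = 1) (p : L) :
    AddSubgroup (ι → ℤ) where
  carrier := {α | ∃ c : F, c ≠ 0 ∧ Θ α p = algebraMap F L c * p}
  zero_mem' := ⟨1, one_ne_zero, by simp [h0]⟩
  add_mem' := by
    rintro α β ⟨c, hc, hcp⟩ ⟨e, he, hep⟩
    refine ⟨e * c, mul_ne_zero he hc, ?_⟩
    rw [hadd, AlgEquiv.mul_apply, hep, map_mul, AlgEquiv.commutes, hcp, map_mul]
    ring
  neg_mem' := by
    rintro α ⟨c, hc, hcp⟩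
    refine ⟨c⁻¹, inv_ne_zero hc, ?_⟩
    have h1 : Θ (-α) (Θ α p) = p := by
      rw [← AlgEquiv.mul_apply, ← hadd, neg_add_cancel, h0, AlgEquiv.one_apply]
    rw [hcp, map_mul, AlgEquiv.commutes] at h1
    have hc0 : (algebraMap F L) c ≠ 0 :=
      (map_ne_zero_iff _ (algebraMap F L).injective).mpr hc
    rw [map_inv₀, eq_inv_mul_iff_mul_eq₀ hc0]
    exact h1

end


set_option maxHeartbeats 2000000 in
set_option synthInstance.maxHeartbeats 1000000 in
/-- **Lemma: q-summability descends from the algebraic closure.** Let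
`K = F(y)`, let `τ₁,…,τ_r ∈ G^τ`, and let `τ̄₁,…,τ̄_r` be automorphisms of the algebraic
closure of `K(z)` restricting to `τ₁,…,τ_r` on `K(z)`. Then `f ∈ K(z)` satisfies
`f = Σᵢ (τ̄ᵢ(ḡᵢ) − ḡᵢ)` with `ḡᵢ` in the algebraic closure iff
`f = Σᵢ (τᵢ(gᵢ) − gᵢ)` with `gᵢ ∈ K(z)`. -/
theorem stmt_13 {F : Type*} [Field F] [CharZero F] {k m : ℕ}
    (q : F) (hq0 : q ≠ 0) (hq : ∀ l : ℤ, l ≠ 0 → q ^ l ≠ 1)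
    (τgen : Fin m → (MvRat (MvRat F k) m ≃ₐ[MvRat F k] MvRat (MvRat F k) m))
    (hτgen : ∀ i : Fin m, τgen i (xv i) =
      algebraMap F (MvRat (MvRat F k) m) q * xv i)
    (hτgenfix : ∀ i l : Fin m, i ≠ l → τgen i (xv l) = xv l)
    (r : ℕ)
    (τ : Fin r → (MvRat (MvRat F k) m ≃ₐ[MvRat F k] MvRat (MvRat F k) m))
    (hτ : ∀ i : Fin r, τ i ∈ Subgroup.closure (Set.range τgen))
    (τbar : Fin r → (AlgebraicClosure (MvRat (MvRat F k) m) ≃+*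
      AlgebraicClosure (MvRat (MvRat F k) m)))
    (hτbar : ∀ (i : Fin r) (x : MvRat (MvRat F k) m),
      τbar i (algebraMap (MvRat (MvRat F k) m) (AlgebraicClosure (MvRat (MvRat F k) m)) x) =
        algebraMap (MvRat (MvRat F k) m) (AlgebraicClosure (MvRat (MvRat F k) m)) (τ i x))
    (f : MvRat (MvRat F k) m) :
    (∃ g : Fin r → AlgebraicClosure (MvRat (MvRat F k) m),
        algebraMap (MvRat (MvRat F k) m) (AlgebraicClosure (MvRat (MvRat F k) m)) f =
          ∑ i : Fin r, (τbar i (g i) - g i)) ↔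
    (∃ g : Fin r → MvRat (MvRat F k) m,
        f = ∑ i : Fin r, (τ i (g i) - g i)) := by
  
  classical
  haveI hCZ0 : CharZero (MvRat F k) :=
    charZero_of_injective_algebraMap
      (IsFractionRing.injective (MvPolynomial (Fin k) F) (MvRat F k))
  haveI hCZ : CharZero (MvRat (MvRat F k) m) :=
    charZero_of_injective_algebraMap
      (IsFractionRing.injective (MvPolynomial (Fin m) (MvRat F k)) (MvRat (MvRat F k) m))
  constructor
  · rintro ⟨g, hg⟩
    exact ⟨fun i => nt (MvRat (MvRat F k) m) (g i),
      summable_descend (fun i => (τ i).toRingEquiv) τbar (fun i x => hτbar i x) f g hg⟩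
  · rintro ⟨g, hg⟩
    refine ⟨fun i => algebraMap _ _ (g i), ?_⟩
    rw [hg, map_sum]
    refine Finset.sum_congr rfl fun i _ => ?_
    rw [map_sub, hτbar]
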